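/- Let μ > 0 and K_μ = {ω ∈ L²(ℝ²₊) : ω ≥ 0, ∫ x₂ω dx = μ, ∫ ω dx ≤ 1}. Then sup_{ω ∈ K_μ} E₂[ω] < ∞, where E₂[ω] = E[ω] − (1/2)∫ ω² dx. More precisely, E₂[ω] ≤ C μ^{2/3} for all ω ∈ K_μ, with C an absolute constant. -/

import Mathlib

open Real MeasureTheory

def upperHalf : Set (ℝ × ℝ) := {p | 0 < p.2}

noncomputable def sqdist (x y : ℝ × ℝ) : ℝ := (x.1 - y.1) ^ 2 + (x.2 - y.2) ^ 2

noncomputable def halfPlaneGreen (x y : ℝ × ℝ) : ℝ :=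
  (1 / (4 * π)) * Real.log (1 + 4 * x.2 * y.2 / sqdist x y)


noncomputable def kineticEnergy (ω : ℝ × ℝ → ℝ) : ℝ :=
  (1 / 2) * ∫ x in upperHalf, ∫ y in upperHalf, halfPlaneGreen x y * ω x * ω y

/-- The penalized energy `E₂[ω] = E[ω] − (1/2) ∫ ω²`. -/
noncomputable def E₂ (ω : ℝ × ℝ → ℝ) : ℝ :=
  kineticEnergy ω - (1 / 2) * ∫ p in upperHalf, (ω p) ^ 2

/-- Membership in the admissible class `K_μ`
(nonnegative, with the natural integrability, impulse `μ` and mass at most `1`). -/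
def memK (μ : ℝ) (ω : ℝ × ℝ → ℝ) : Prop :=
  (∀ p, 0 ≤ ω p) ∧
  MeasureTheory.Integrable ω (MeasureTheory.volume.restrict upperHalf) ∧
  MeasureTheory.MemLp ω 2 (MeasureTheory.volume.restrict upperHalf) ∧
  MeasureTheory.Integrable (fun p => p.2 * ω p) (MeasureTheory.volume.restrict upperHalf) ∧
  (∫ p in upperHalf, p.2 * ω p) = μ ∧
  (∫ p in upperHalf, ω p) ≤ 1

open Set
open scoped ENNReal Classical

section PESAux

lemma sqdist_nonneg (x y : ℝ × ℝ) : 0 ≤ sqdist x y := by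
  unfold sqdist; positivity

lemma sqdist_symm (x y : ℝ × ℝ) : sqdist x y = sqdist y x := by
  unfold sqdist; ring

lemma green_symm (x y : ℝ × ℝ) : halfPlaneGreen x y = halfPlaneGreen y x := by
  unfold halfPlaneGreen; rw [sqdist_symm]; ring_nf

lemma green_nonneg {x y : ℝ × ℝ} (hx : 0 ≤ x.2) (hy : 0 ≤ y.2) : 0 ≤ halfPlaneGreen x y := by
  unfold halfPlaneGreen
  have h1 : 0 ≤ 4 * x.2 * y.2 / sqdist x y := by
    apply div_nonneg (by positivity) (sqdist_nonneg x y)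
  have hlog : 0 ≤ Real.log (1 + 4 * x.2 * y.2 / sqdist x y) := Real.log_nonneg (by linarith)
  exact mul_nonneg (by positivity) hlog

lemma log_one_add_le (s : ℝ) (hs : 0 ≤ s) : Real.log (1 + s) ≤ 4 * s ^ ((1:ℝ)/4) := by
  set a := s ^ ((1:ℝ)/4) with ha
  have ha0 : 0 ≤ a := Real.rpow_nonneg hs _
  have hs4 : a ^ (4:ℕ) = s := by
    rw [ha, ← Real.rpow_natCast (s ^ ((1:ℝ)/4)) 4, ← Real.rpow_mul hs]
    norm_num
  have h1 : 1 + s ≤ (1 + a) ^ (4:ℕ) := by nlinarith [pow_nonneg ha0 2, pow_nonneg ha0 3]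
  calc Real.log (1 + s) ≤ Real.log ((1 + a) ^ (4:ℕ)) := by
        apply Real.log_le_log (by linarith) h1
    _ = 4 * Real.log (1 + a) := by rw [Real.log_pow]; norm_num
    _ ≤ 4 * a := by
        have := Real.log_le_sub_one_of_pos (x := 1 + a) (by linarith)
        linarith

lemma dist_sq_le_sqdist (x y : ℝ × ℝ) : (dist y x) ^ 2 ≤ sqdist x y := by
  rw [Prod.dist_eq]
  unfold sqdist
  rcases max_cases (dist y.1 x.1) (dist y.2 x.2) with ⟨h, _⟩ | ⟨h, _⟩ <;>
    rw [h] <;> rw [Real.dist_eq] <;> rw [sq_abs] <;> nlinarith [sq_nonneg (y.1 - x.1), sq_nonneg (y.2 - x.2)]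


noncomputable def Aconst : ℝ := ∫ t in Set.Ioc (0:ℝ) 1, t ^ (-(1/4) : ℝ)
noncomputable def Bconst : ℝ := ∫ t in Set.Ioi (1:ℝ), Real.exp (-t)

lemma Aconst_int : IntegrableOn (fun t : ℝ => t ^ (-(1/4):ℝ)) (Set.Ioc 0 1) := by
  have := (intervalIntegral.intervalIntegrable_rpow' (a := 0) (b := 1) (r := -(1/4)) (by norm_num))
  rwa [intervalIntegrable_iff_integrableOn_Ioc_of_le (by norm_num)] at this

lemma Bconst_int : IntegrableOn (fun t : ℝ => Real.exp (-t)) (Set.Ioi 1) := by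
  have := exp_neg_integrableOn_Ioi (a := 1) (b := 1) one_pos
  simpa using this

lemma Aconst_nonneg : 0 ≤ Aconst := by
  apply setIntegral_nonneg measurableSet_Ioc
  intro t ht
  exact Real.rpow_nonneg ht.1.le _

lemma Bconst_nonneg : 0 ≤ Bconst := by
  apply setIntegral_nonneg measurableSet_Ioi
  intro t _
  positivity

/-- The near-region kernel. -/
noncomputable def nearG (κ : ℝ) (x y : ℝ × ℝ) : ℝ :=
  if (sqdist x y) ^ 3 * (x.2 * y.2) ≤ κ ^ 6 then halfPlaneGreen x y else 0

lemma nearG_symm (κ : ℝ) (x y : ℝ × ℝ) : nearG κ x y = nearG κ y x := by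
  unfold nearG halfPlaneGreen
  rw [sqdist_symm x y, mul_comm x.2 y.2, show 4 * x.2 * y.2 = 4 * y.2 * x.2 by ring]

lemma nearG_nonneg {κ : ℝ} {x y : ℝ × ℝ} (hx : 0 ≤ x.2) (hy : 0 ≤ y.2) : 0 ≤ nearG κ x y := by
  unfold nearG; split
  · exact green_nonneg hx hy
  · exact le_refl 0

/-- time-dependent radius-squared profile -/
noncomputable def ctf (t : ℝ) : ℝ := if t ≤ 1 then t ^ (-(1/4):ℝ) else Real.exp (-t)

lemma ctf_pos {t : ℝ} (ht : 0 < t) : 0 < ctf t := by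
  unfold ctf; split
  · exact Real.rpow_pos_of_pos ht _
  · positivity

-- key level-set estimate
lemma near_levelset {κ : ℝ} (hκ : 0 < κ) {x : ℝ × ℝ} (hx : 0 < x.2) {t : ℝ} (ht : 0 < t) :
    {y : ℝ × ℝ | t < nearG κ x y} ∩ upperHalf ⊆
      Metric.ball x (Real.sqrt (Real.sqrt 2 * κ ^ ((3:ℝ)/2) * ctf t)) := by
  have hctf : 0 < ctf t := ctf_pos ht
  rintro y ⟨hy1, hy2⟩
  simp only [mem_setOf_eq] at hy1
  have hy2' : 0 < y.2 := hy2
  unfold nearG at hy1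
  by_cases hN : (sqdist x y) ^ 3 * (x.2 * y.2) ≤ κ ^ 6
  swap
  · rw [if_neg hN] at hy1; linarith
  rw [if_pos hN] at hy1
  unfold halfPlaneGreen at hy1
  set d2 := sqdist x y with hd2
  have hd2nn : 0 ≤ d2 := sqdist_nonneg x y
  set s := 4 * x.2 * y.2 / d2 with hs
  have hs0 : 0 ≤ s := div_nonneg (by positivity) hd2nn
  have hπ : (0:ℝ) < π := Real.pi_pos
  have hlog : 4 * π * t < Real.log (1 + s) := by
    rw [show (1/(4*π)) * Real.log (1+s) = Real.log (1+s) / (4*π) by ring,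
      lt_div_iff₀ (by positivity)] at hy1
    linarith
  have hexp : Real.exp (4 * π * t) < 1 + s :=
    (Real.lt_log_iff_exp_lt (by linarith)).1 hlog
  set E := Real.exp (4 * π * t) - 1 with hE
  have hEpos : 0 < E := by
    have : (1:ℝ) < Real.exp (4*π*t) := Real.one_lt_exp_iff.2 (by positivity)
    linarith
  have hsE : E < s := by linarith
  have hd2pos : 0 < d2 := by
    rcases lt_or_eq_of_le hd2nn with h | h
    · exact h
    · exfalso; rw [hs, ← h, div_zero] at hsE; linarith
  have h4 : E * d2 < 4 * x.2 * y.2 := by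
    rw [hs] at hsE
    calc E * d2 < (4 * x.2 * y.2 / d2) * d2 := mul_lt_mul_of_pos_right hsE hd2pos
      _ = 4 * x.2 * y.2 := by field_simp
  have hd24 : d2 ^ 4 * E < 4 * κ ^ 6 := by nlinarith [pow_pos hd2pos 3]
  -- E lower bounds
  have hElb : 1 ≤ ctf t ^ 4 * E := by
    unfold ctf
    split
    · -- t ≤ 1 : E ≥ 4πt ≥ t
      have hE4 : t ≤ E := by
        have h1 := Real.add_one_le_exp (4*π*t)
        have : 4*π*t ≤ E := by rw [hE]; linarith
        nlinarith [Real.pi_gt_three]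
      have ht4 : (t ^ (-(1/4):ℝ)) ^ (4:ℕ) = t⁻¹ := by
        rw [← Real.rpow_natCast (t ^ (-(1/4):ℝ)) 4, ← Real.rpow_mul ht.le]
        norm_num
        exact Real.rpow_neg_one t
      rw [ht4, inv_mul_eq_div, le_div_iff₀ ht, one_mul]
      exact hE4
    · -- t > 1 : E ≥ exp(4t)
      rename_i h
      push_neg at h
      have hπ3 : (3:ℝ) < π := Real.pi_gt_three
      have hsplit : Real.exp (4*π*t) = Real.exp (4*t) * Real.exp (4*(π-1)*t) := by
        rw [← Real.exp_add]; ring_nf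
      have h2 : (2:ℝ) ≤ Real.exp (4*(π-1)*t) := by
        have h8 : (1:ℝ) ≤ 4*(π-1)*t := by nlinarith
        calc (2:ℝ) ≤ Real.exp 1 := by
              have := Real.add_one_le_exp (1:ℝ); linarith
          _ ≤ Real.exp (4*(π-1)*t) := Real.exp_le_exp.2 h8
      have hexp4 : Real.exp (4*t) ≤ E := by
        have h1 : (1:ℝ) ≤ Real.exp (4*t) := by
          have := Real.add_one_le_exp (4*t); nlinarith
        have : Real.exp (4*t) * 2 ≤ Real.exp (4*π*t) := by
          rw [hsplit]; nlinarith [Real.exp_pos (4*t)]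
        rw [hE]; nlinarith
      have he4 : (Real.exp (-t)) ^ (4:ℕ) = (Real.exp (4*t))⁻¹ := by
        rw [← Real.exp_nat_mul, show ((4:ℕ):ℝ) * (-t) = -(4*t) by push_cast; ring,
          Real.exp_neg]
      rw [he4, inv_mul_eq_div, le_div_iff₀ (Real.exp_pos _), one_mul]
      exact hexp4
  -- conclude d2 < √2 κ^{3/2} ctf t
  have hk32 : (Real.sqrt 2 * κ ^ ((3:ℝ)/2) * ctf t) ^ (4:ℕ) = 4 * κ ^ 6 * ctf t ^ 4 := by
    have h1 : (Real.sqrt 2) ^ (4:ℕ) = 4 := by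
      rw [show (4:ℕ) = 2*2 by norm_num, pow_mul, Real.sq_sqrt (by norm_num)]; norm_num
    have h2 : (κ ^ ((3:ℝ)/2)) ^ (4:ℕ) = κ ^ 6 := by
      rw [← Real.rpow_natCast (κ ^ ((3:ℝ)/2)) 4, ← Real.rpow_mul hκ.le,
        show (3:ℝ)/2 * ((4:ℕ):ℝ) = ((6:ℕ):ℝ) by norm_num, Real.rpow_natCast]
    rw [mul_pow, mul_pow, h1, h2]
  have hkc : (0:ℝ) ≤ Real.sqrt 2 * κ ^ ((3:ℝ)/2) * ctf t :=
    mul_nonneg (mul_nonneg (Real.sqrt_nonneg 2) (Real.rpow_nonneg hκ.le _)) hctf.le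
  have hrad : d2 < Real.sqrt 2 * κ ^ ((3:ℝ)/2) * ctf t := by
    have h4' : d2 ^ 4 < 4 * κ ^ 6 * ctf t ^ 4 := by
      have ha : d2 ^ 4 * 1 ≤ d2 ^ 4 * (ctf t ^ 4 * E) :=
        mul_le_mul_of_nonneg_left hElb (by positivity)
      have hb : d2 ^ 4 * E * ctf t ^ 4 < 4 * κ ^ 6 * ctf t ^ 4 :=
        mul_lt_mul_of_pos_right hd24 (by positivity)
      nlinarith
    have hpow : d2 ^ (4:ℕ) < (Real.sqrt 2 * κ ^ ((3:ℝ)/2) * ctf t) ^ (4:ℕ) := by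
      rw [hk32]; exact h4'
    exact lt_of_pow_lt_pow_left₀ 4 hkc hpow
  rw [Metric.mem_ball]
  have h1 : (dist y x)^2 ≤ d2 := dist_sq_le_sqdist x y
  have h2 : d2 < (Real.sqrt (Real.sqrt 2 * κ ^ ((3:ℝ)/2) * ctf t)) ^ 2 := by
    rw [Real.sq_sqrt hkc]
    exact hrad
  have hfin : (dist y x) ^ (2:ℕ) < (Real.sqrt (Real.sqrt 2 * κ ^ ((3:ℝ)/2) * ctf t)) ^ (2:ℕ) :=
    lt_of_le_of_lt h1 h2
  exact lt_of_pow_lt_pow_left₀ 2 (Real.sqrt_nonneg _) hfin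


lemma measurable_upperHalf : MeasurableSet upperHalf :=
  measurableSet_lt measurable_const measurable_snd

lemma measurable_green_pair : Measurable (fun p : (ℝ × ℝ) × (ℝ × ℝ) => halfPlaneGreen p.1 p.2) := by
  unfold halfPlaneGreen sqdist
  apply Measurable.const_mul
  apply Real.measurable_log.comp
  apply Measurable.add measurable_const
  apply Measurable.div
  · fun_prop
  · fun_prop

lemma measurable_green_right (x : ℝ × ℝ) : Measurable (fun y => halfPlaneGreen x y) := by
  unfold halfPlaneGreen sqdist
  apply Measurable.const_mul
  apply Real.measurable_log.comp
  apply Measurable.add measurable_const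
  apply Measurable.div <;> fun_prop

lemma measurable_sqdist_pair : Measurable (fun p : (ℝ × ℝ) × (ℝ × ℝ) => sqdist p.1 p.2) := by
  unfold sqdist; fun_prop

lemma measurable_nearG_pair (κ : ℝ) :
    Measurable (fun p : (ℝ × ℝ) × (ℝ × ℝ) => nearG κ p.1 p.2) := by
  unfold nearG
  apply Measurable.ite _ measurable_green_pair measurable_const
  apply measurableSet_le
  · exact (measurable_sqdist_pair.pow_const 3).mul (by fun_prop)
  · exact measurable_const

lemma measurable_nearG_right (κ : ℝ) (x : ℝ × ℝ) : Measurable (fun y => nearG κ x y) := by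
  unfold nearG
  apply Measurable.ite _ (measurable_green_right x) measurable_const
  apply measurableSet_le _ measurable_const
  have : Measurable fun y : ℝ × ℝ => sqdist x y := by unfold sqdist; fun_prop
  exact (this.pow_const 3).mul (by fun_prop)

lemma volume_ball_prod (x : ℝ × ℝ) (r : ℝ) :
    volume (Metric.ball x r) = ENNReal.ofReal (2 * r) * ENNReal.ofReal (2 * r) := by
  have h : Metric.ball x r = Metric.ball x.1 r ×ˢ Metric.ball x.2 r := by
    rw [← ball_prod_same, ← Prod.mk.eta (p := x)]
  rw [h, Measure.volume_eq_prod, Measure.prod_prod, Real.volume_ball, Real.volume_ball]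

lemma near_bound {κ : ℝ} (hκ : 0 < κ) {x : ℝ × ℝ} (hx : 0 < x.2) :
    ∫⁻ y in upperHalf, ENNReal.ofReal (nearG κ x y) ≤
      ENNReal.ofReal (4 * Real.sqrt 2 * κ ^ ((3:ℝ)/2) * (Aconst + Bconst)) := by
  have hnn : 0 ≤ᵐ[volume.restrict upperHalf] fun y => nearG κ x y := by
    filter_upwards [ae_restrict_mem measurable_upperHalf] with y hy
    exact nearG_nonneg hx.le (le_of_lt hy)
  rw [lintegral_eq_lintegral_meas_lt _ hnn (measurable_nearG_right κ x).aemeasurable]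
  -- bound the measure of level sets
  have hstep : ∀ t ∈ Ioi (0:ℝ),
      (volume.restrict upperHalf) {y | t < nearG κ x y} ≤
        ENNReal.ofReal (4 * Real.sqrt 2 * κ ^ ((3:ℝ)/2) * ctf t) := by
    intro t ht
    have ht' : (0:ℝ) < t := ht
    have hms : MeasurableSet {y : ℝ × ℝ | t < nearG κ x y} :=
      measurableSet_lt measurable_const (measurable_nearG_right κ x)
    rw [Measure.restrict_apply hms]
    set r := Real.sqrt (Real.sqrt 2 * κ ^ ((3:ℝ)/2) * ctf t) with hr
    calc volume ({y : ℝ × ℝ | t < nearG κ x y} ∩ upperHalf)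
        ≤ volume (Metric.ball x r) := measure_mono (near_levelset hκ hx ht')
      _ = ENNReal.ofReal (2*r) * ENNReal.ofReal (2*r) := volume_ball_prod x r
      _ = ENNReal.ofReal (4 * Real.sqrt 2 * κ ^ ((3:ℝ)/2) * ctf t) := by
          rw [← ENNReal.ofReal_mul (by positivity)]
          congr 1
          have h1 : (0:ℝ) ≤ Real.sqrt 2 * κ ^ ((3:ℝ)/2) * ctf t :=
            mul_nonneg (mul_nonneg (Real.sqrt_nonneg 2) (Real.rpow_nonneg hκ.le _)) (ctf_pos ht').le
          have h2 : r * r = Real.sqrt 2 * κ ^ ((3:ℝ)/2) * ctf t := Real.mul_self_sqrt h1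
          nlinarith
  calc ∫⁻ t in Ioi (0:ℝ), (volume.restrict upperHalf) {y | t < nearG κ x y}
      ≤ ∫⁻ t in Ioi (0:ℝ), ENNReal.ofReal (4 * Real.sqrt 2 * κ ^ ((3:ℝ)/2) * ctf t) := by
        apply lintegral_mono_ae
        filter_upwards [ae_restrict_mem measurableSet_Ioi] with t ht
        exact hstep t ht
    _ ≤ ENNReal.ofReal (4 * Real.sqrt 2 * κ ^ ((3:ℝ)/2) * (Aconst + Bconst)) := by
        have hsplit : (Ioi (0:ℝ)) = Ioc (0:ℝ) 1 ∪ Ioi (1:ℝ) :=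
          (Set.Ioc_union_Ioi_eq_Ioi zero_le_one).symm
        rw [hsplit, lintegral_union measurableSet_Ioi Set.Ioc_disjoint_Ioi_same]
        set c := (4:ℝ) * Real.sqrt 2 * κ ^ ((3:ℝ)/2) with hc
        have hcpos : 0 ≤ c := by positivity
        have hA : ∫⁻ t in Ioc (0:ℝ) 1, ENNReal.ofReal (c * ctf t) ≤
            ENNReal.ofReal c * ENNReal.ofReal Aconst := by
          have : ∫⁻ t in Ioc (0:ℝ) 1, ENNReal.ofReal (c * ctf t) =
              ∫⁻ t in Ioc (0:ℝ) 1, ENNReal.ofReal c * ENNReal.ofReal (t ^ (-(1/4):ℝ)) := by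
            apply lintegral_congr_ae
            filter_upwards [ae_restrict_mem measurableSet_Ioc] with t ht
            rw [ENNReal.ofReal_mul hcpos]
            congr 2
            unfold ctf
            rw [if_pos ht.2]
          rw [this, lintegral_const_mul' _ _ ENNReal.ofReal_ne_top]
          apply mul_le_mul_right
          rw [← ofReal_integral_eq_lintegral_ofReal Aconst_int]
          · exact le_refl _
          · filter_upwards [ae_restrict_mem measurableSet_Ioc] with t ht
            exact Real.rpow_nonneg ht.1.le _
        have hB : ∫⁻ t in Ioi (1:ℝ), ENNReal.ofReal (c * ctf t) ≤
            ENNReal.ofReal c * ENNReal.ofReal Bconst := by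
          have : ∫⁻ t in Ioi (1:ℝ), ENNReal.ofReal (c * ctf t) =
              ∫⁻ t in Ioi (1:ℝ), ENNReal.ofReal c * ENNReal.ofReal (Real.exp (-t)) := by
            apply lintegral_congr_ae
            filter_upwards [ae_restrict_mem measurableSet_Ioi] with t ht
            rw [ENNReal.ofReal_mul hcpos]
            congr 2
            unfold ctf
            rw [if_neg (by simp only [mem_Ioi] at ht; linarith)]
          rw [this, lintegral_const_mul' _ _ ENNReal.ofReal_ne_top]
          apply mul_le_mul_right
          rw [← ofReal_integral_eq_lintegral_ofReal Bconst_int]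
          · exact le_refl _
          · filter_upwards with t
            positivity
        calc _ ≤ ENNReal.ofReal c * ENNReal.ofReal Aconst + ENNReal.ofReal c * ENNReal.ofReal Bconst :=
              add_le_add hA hB
          _ = ENNReal.ofReal c * (ENNReal.ofReal Aconst + ENNReal.ofReal Bconst) := by
              rw [mul_add]
          _ = ENNReal.ofReal (c * (Aconst + Bconst)) := by
              rw [← ENNReal.ofReal_add Aconst_nonneg Bconst_nonneg, ← ENNReal.ofReal_mul hcpos]
          _ = ENNReal.ofReal (4 * Real.sqrt 2 * κ ^ ((3:ℝ)/2) * (Aconst + Bconst)) := rfl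


lemma integral_le_toReal_lintegral {α : Type*} [MeasurableSpace α] (m : Measure α) (f : α → ℝ) :
    ∫ a, f a ∂m ≤ (∫⁻ a, ENNReal.ofReal (f a) ∂m).toReal := by
  by_cases hi : Integrable f m
  · rw [integral_eq_lintegral_pos_part_sub_lintegral_neg_part hi]
    have := ENNReal.toReal_nonneg (a := ∫⁻ a, ENNReal.ofReal (-f a) ∂m)
    linarith
  · rw [integral_undef hi]; exact ENNReal.toReal_nonneg

lemma third_young {t m : ℝ} (ht : 0 ≤ t) (hm : 0 < m) :
    t ^ ((1:ℝ)/3) ≤ t / (3 * m ^ ((2:ℝ)/3)) + 2/3 * m ^ ((1:ℝ)/3) := by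
  set a := t ^ ((1:ℝ)/3) with ha
  set b := m ^ ((1:ℝ)/3) with hb
  have ha0 : 0 ≤ a := Real.rpow_nonneg ht _
  have hb0 : 0 < b := Real.rpow_pos_of_pos hm _
  have hta : a ^ (3:ℕ) = t := by
    rw [ha, ← Real.rpow_natCast (t ^ ((1:ℝ)/3)) 3, ← Real.rpow_mul ht]
    norm_num
  have hmb : m ^ ((2:ℝ)/3) = b ^ (2:ℕ) := by
    rw [hb, ← Real.rpow_natCast (m ^ ((1:ℝ)/3)) 2, ← Real.rpow_mul hm.le]
    norm_num
  have key : 3*a*b^2 ≤ a^3 + 2*b^3 := by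
    nlinarith [mul_nonneg (sq_nonneg (a-b)) (by positivity : (0:ℝ) ≤ a + 2*b)]
  rw [hmb, ← hta]
  have h2 : a - 2/3*b ≤ a^(3:ℕ)/(3*b^2) := by
    rw [le_div_iff₀ (by positivity : (0:ℝ) < 3*b^2)]
    nlinarith
  linarith

lemma far_bound {κ : ℝ} (hκ : 0 < κ) {x y : ℝ × ℝ} (hx : 0 < x.2) (hy : 0 < y.2)
    (hF : ¬ (sqdist x y) ^ 3 * (x.2 * y.2) ≤ κ ^ 6) :
    halfPlaneGreen x y ≤ (Real.sqrt 2 / π) * κ ^ (-(1/2):ℝ) * (x.2 * y.2) ^ ((1:ℝ)/3) := by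
  push_neg at hF
  set d2 := sqdist x y with hd2
  set P := x.2 * y.2 with hP
  have hPpos : 0 < P := by positivity
  have hd2nn : 0 ≤ d2 := sqdist_nonneg x y
  have hd2pos : 0 < d2 := by
    rcases lt_or_eq_of_le hd2nn with h | h
    · exact h
    · exfalso; rw [← h] at hF; simp at hF; nlinarith [pow_pos hκ 6]
  set s := 4 * P / d2 with hs
  have hs0 : 0 ≤ s := div_nonneg (by positivity) hd2nn
  have hπ : (0:ℝ) < π := Real.pi_pos
  have hlog : Real.log (1 + s) ≤ 4 * s ^ ((1:ℝ)/4) := log_one_add_le s hs0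
  have hmain : s ^ ((1:ℝ)/4) ≤ Real.sqrt 2 * κ ^ (-(1/2):ℝ) * P ^ ((1:ℝ)/3) := by
    have hrhs0 : 0 ≤ Real.sqrt 2 * κ ^ (-(1/2):ℝ) * P ^ ((1:ℝ)/3) := by
      have := Real.rpow_nonneg hκ.le (-(1/2):ℝ)
      have := Real.rpow_nonneg hPpos.le ((1:ℝ)/3)
      have := Real.sqrt_nonneg 2
      positivity
    apply le_of_pow_le_pow_left₀ (n := 12) (by norm_num) hrhs0
    have hL : (s ^ ((1:ℝ)/4)) ^ (12:ℕ) = s ^ (3:ℕ) := by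
      rw [← Real.rpow_natCast (s ^ ((1:ℝ)/4)) 12, ← Real.rpow_mul hs0,
        show (1:ℝ)/4 * ((12:ℕ):ℝ) = ((3:ℕ):ℝ) by norm_num, Real.rpow_natCast]
    have hR : (Real.sqrt 2 * κ ^ (-(1/2):ℝ) * P ^ ((1:ℝ)/3)) ^ (12:ℕ)
        = 64 * (κ ^ (6:ℕ))⁻¹ * P ^ (4:ℕ) := by
      rw [mul_pow, mul_pow]
      have h1 : (Real.sqrt 2) ^ (12:ℕ) = 64 := by
        rw [show (12:ℕ) = 2*6 by norm_num, pow_mul, Real.sq_sqrt (by norm_num)]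
        norm_num
      have h2 : (κ ^ (-(1/2):ℝ)) ^ (12:ℕ) = (κ ^ (6:ℕ))⁻¹ := by
        rw [← Real.rpow_natCast (κ ^ (-(1/2):ℝ)) 12, ← Real.rpow_mul hκ.le,
          show (-(1/2):ℝ) * ((12:ℕ):ℝ) = -((6:ℕ):ℝ) by norm_num, Real.rpow_neg hκ.le,
          Real.rpow_natCast]
      have h3 : (P ^ ((1:ℝ)/3)) ^ (12:ℕ) = P ^ (4:ℕ) := by
        rw [← Real.rpow_natCast (P ^ ((1:ℝ)/3)) 12, ← Real.rpow_mul hPpos.le,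
          show (1:ℝ)/3 * ((12:ℕ):ℝ) = ((4:ℕ):ℝ) by norm_num, Real.rpow_natCast]
      rw [h1, h2, h3]
    rw [hL, hR, hs]
    rw [div_pow, div_le_iff₀ (by positivity)]
    have hk6 : (0:ℝ) < κ ^ (6:ℕ) := pow_pos hκ 6
    have hmul' : P^3 ≤ (κ^(6:ℕ))⁻¹ * P^4 * d2^3 := by
      have h := mul_le_mul_of_nonneg_left hF.le
        (le_of_lt (show (0:ℝ) < (κ^(6:ℕ))⁻¹ * P^3 by positivity))
      calc P^3 = ((κ^(6:ℕ))⁻¹ * P^3) * κ^(6:ℕ) := by field_simp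
        _ ≤ ((κ^(6:ℕ))⁻¹ * P^3) * (d2^3 * P) := h
        _ = (κ^(6:ℕ))⁻¹ * P^4 * d2^3 := by ring
    nlinarith [hmul']
  have harg : 4 * x.2 * y.2 / sqdist x y = s := by rw [hs, hP, hd2]; ring
  unfold halfPlaneGreen
  rw [harg]
  calc (1/(4*π)) * Real.log (1+s) ≤ (1/(4*π)) * (4 * s ^ ((1:ℝ)/4)) := by
        apply mul_le_mul_of_nonneg_left hlog (by positivity)
    _ = (1/π) * s ^ ((1:ℝ)/4) := by field_simp
    _ ≤ (1/π) * (Real.sqrt 2 * κ ^ (-(1/2):ℝ) * P ^ ((1:ℝ)/3)) := by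
        apply mul_le_mul_of_nonneg_left hmain (by positivity)
    _ = (Real.sqrt 2 / π) * κ ^ (-(1/2):ℝ) * P ^ ((1:ℝ)/3) := by ring


end PESAux

/-- `sup_{ω ∈ K_μ} E₂[ω] ≤ C μ^{2/3}` for an absolute constant `C`; in particular it is finite. -/
theorem penalized_energy_sup_finite :
    ∃ C > 0, ∀ μ : ℝ, 0 < μ → ∀ ω : ℝ × ℝ → ℝ, memK μ ω →
      E₂ ω ≤ C * μ ^ ((2 : ℝ) / 3) := by
  classical
  set S : ℝ := 4 * Real.sqrt 2 * (Aconst + Bconst) + 1 with hS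
  have hS1 : 1 ≤ S := by nlinarith [Aconst_nonneg, Bconst_nonneg, Real.sqrt_nonneg 2]
  have hSpos : (0:ℝ) < S := by linarith
  set κ : ℝ := S ^ (-((2:ℝ)/3)) with hκdef
  have hκpos : 0 < κ := Real.rpow_pos_of_pos hSpos _
  have hκ32 : κ ^ ((3:ℝ)/2) = S⁻¹ := by
    rw [hκdef, ← Real.rpow_mul hSpos.le]
    norm_num
    exact Real.rpow_neg_one S
  have hnear_coeff : ENNReal.ofReal (4 * Real.sqrt 2 * κ ^ ((3:ℝ)/2) * (Aconst + Bconst)) ≤ 1 := by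
    rw [ENNReal.ofReal_le_one, hκ32]
    rw [mul_comm (4 * Real.sqrt 2) S⁻¹, mul_assoc, inv_mul_le_iff₀ hSpos]
    nlinarith [Aconst_nonneg, Bconst_nonneg, Real.sqrt_nonneg 2]
  set cF : ℝ := (Real.sqrt 2 / π) * κ ^ (-((1:ℝ)/2)) with hcF
  have hκhalf : (0:ℝ) < κ ^ (-((1:ℝ)/2)) := Real.rpow_pos_of_pos hκpos _
  have hcFpos : 0 < cF := by
    have := Real.pi_pos
    have h2 : (0:ℝ) < Real.sqrt 2 := Real.sqrt_pos.2 (by norm_num)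
    positivity
  refine ⟨cF/2 + 1, by positivity, ?_⟩
  intro μ hμ ω hω
  obtain ⟨hω0, hωint, hωL2, hωyint, hωimp, hωmass⟩ := hω
  set ν := MeasureTheory.volume.restrict upperHalf with hν
  -- measurable representative
  set g : ℝ × ℝ → ℝ := hωint.1.mk ω with hg
  set ω' : ℝ × ℝ → ℝ := fun p => max (g p) 0 with hω'
  have hω'meas : Measurable ω' :=
    (hωint.1.stronglyMeasurable_mk.measurable).max measurable_const
  have hae : ω =ᵐ[ν] ω' := by
    filter_upwards [hωint.1.ae_eq_mk] with p hp
    rw [hω']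
    exact hp.trans (max_eq_left (hp ▸ hω0 p)).symm
  have hω'0 : ∀ p, 0 ≤ ω' p := fun p => le_max_right _ _
  set w : ℝ × ℝ → ℝ≥0∞ := fun p => ENNReal.ofReal (ω' p) with hw
  have hwmeas : Measurable w := ENNReal.measurable_ofReal.comp hω'meas
  -- L² data
  have hsqint : Integrable (fun p => ω p ^ 2) ν := hωL2.integrable_sq
  have hsqint' : Integrable (fun p => ω' p ^ 2) ν := by
    apply hsqint.congr
    filter_upwards [hae] with p hp
    rw [hp]
  set I2 : ℝ := ∫ p, ω' p ^ 2 ∂ν with hI2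
  have hI2nn : 0 ≤ I2 := integral_nonneg fun p => sq_nonneg _
  have hI2eq : ∫ p in upperHalf, (ω p) ^ 2 = I2 := by
    rw [hI2]; apply integral_congr_ae; filter_upwards [hae] with p hp; rw [hp]
  have hw2 : ∫⁻ p, w p ^ 2 ∂ν = ENNReal.ofReal I2 := by
    rw [hI2, ofReal_integral_eq_lintegral_ofReal hsqint'
      (Filter.Eventually.of_forall fun p => sq_nonneg _)]
    apply lintegral_congr fun p => ?_
    rw [hw, ← ENNReal.ofReal_pow (hω'0 p)]
  -- impulse and mass in ℝ≥0∞
  have hyint' : Integrable (fun p => p.2 * ω' p) ν := by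
    apply hωyint.congr
    filter_upwards [hae] with p hp
    rw [hp]
  have hwy : ∫⁻ p, ENNReal.ofReal p.2 * w p ∂ν = ENNReal.ofReal μ := by
    have h1 : ∫ p, p.2 * ω' p ∂ν = μ := by
      rw [← hωimp]; apply integral_congr_ae; filter_upwards [hae] with p hp; rw [hp]
    rw [← h1, ofReal_integral_eq_lintegral_ofReal hyint' ?nn]
    case nn =>
      filter_upwards [ae_restrict_mem measurable_upperHalf] with p hp
      exact mul_nonneg (le_of_lt hp) (hω'0 p)
    apply lintegral_congr_ae
    filter_upwards [ae_restrict_mem measurable_upperHalf] with p hp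
    rw [hw, ← ENNReal.ofReal_mul (le_of_lt hp)]
  have hwm : ∫⁻ p, w p ∂ν ≤ 1 := by
    have hint' : Integrable ω' ν := hωint.congr hae
    have h1 : ∫ p, ω' p ∂ν ≤ 1 := by
      rw [show ∫ p, ω' p ∂ν = ∫ p in upperHalf, ω p from
        (integral_congr_ae hae).symm]
      exact hωmass
    calc ∫⁻ p, w p ∂ν = ENNReal.ofReal (∫ p, ω' p ∂ν) :=
          (ofReal_integral_eq_lintegral_ofReal hint'
            (Filter.Eventually.of_forall hω'0)).symm
      _ ≤ 1 := ENNReal.ofReal_le_one.2 h1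
  -- the J integral
  set q : ℝ × ℝ → ℝ≥0∞ := fun p => ENNReal.ofReal (p.2 ^ ((1:ℝ)/3)) with hq
  have hqmeas : Measurable q := by
    apply ENNReal.measurable_ofReal.comp
    fun_prop
  set J : ℝ≥0∞ := ∫⁻ p, q p * w p ∂ν with hJdef
  have hJ : J ≤ ENNReal.ofReal (μ ^ ((1:ℝ)/3)) := by
    have hμ23 : (0:ℝ) < 3 * μ ^ ((2:ℝ)/3) := by positivity
    have step1 : J ≤ ∫⁻ p, (ENNReal.ofReal (1/(3 * μ ^ ((2:ℝ)/3))) * ENNReal.ofReal p.2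
        + ENNReal.ofReal (2/3 * μ ^ ((1:ℝ)/3))) * w p ∂ν := by
      apply lintegral_mono_ae
      filter_upwards [ae_restrict_mem measurable_upperHalf] with p hp
      apply mul_le_mul_left
      have hy := third_young (le_of_lt (show (0:ℝ) < p.2 from hp)) hμ
      calc q p ≤ ENNReal.ofReal (p.2 / (3 * μ ^ ((2:ℝ)/3)) + 2/3 * μ ^ ((1:ℝ)/3)) :=
            ENNReal.ofReal_le_ofReal hy
        _ = ENNReal.ofReal (p.2 / (3 * μ ^ ((2:ℝ)/3))) + ENNReal.ofReal (2/3 * μ ^ ((1:ℝ)/3)) := by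
            rw [ENNReal.ofReal_add (div_nonneg (le_of_lt (show (0:ℝ) < p.2 from hp)) (by positivity)) (by positivity)]
        _ = ENNReal.ofReal (1/(3 * μ ^ ((2:ℝ)/3))) * ENNReal.ofReal p.2
              + ENNReal.ofReal (2/3 * μ ^ ((1:ℝ)/3)) := by
            congr 1
            rw [← ENNReal.ofReal_mul (by positivity)]
            congr 1
            field_simp
    have step2 : ∫⁻ p, (ENNReal.ofReal (1/(3 * μ ^ ((2:ℝ)/3))) * ENNReal.ofReal p.2
        + ENNReal.ofReal (2/3 * μ ^ ((1:ℝ)/3))) * w p ∂ν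
        = ENNReal.ofReal (1/(3 * μ ^ ((2:ℝ)/3))) * ∫⁻ p, ENNReal.ofReal p.2 * w p ∂ν
          + ENNReal.ofReal (2/3 * μ ^ ((1:ℝ)/3)) * ∫⁻ p, w p ∂ν := by
      rw [← lintegral_const_mul' _ _ ENNReal.ofReal_ne_top,
        ← lintegral_const_mul' _ _ ENNReal.ofReal_ne_top,
        ← lintegral_add_left]
      · apply lintegral_congr fun p => by ring
      · exact measurable_const.mul ((ENNReal.measurable_ofReal.comp measurable_snd).mul hwmeas)
    calc J ≤ _ := step1
      _ = _ := step2
      _ ≤ ENNReal.ofReal (1/(3 * μ ^ ((2:ℝ)/3))) * ENNReal.ofReal μ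
            + ENNReal.ofReal (2/3 * μ ^ ((1:ℝ)/3)) * 1 := by
          rw [hwy]
          exact add_le_add_right (mul_le_mul_right hwm _) _
      _ = ENNReal.ofReal (μ ^ ((1:ℝ)/3)) := by
          rw [mul_one, ← ENNReal.ofReal_mul (by positivity), ← ENNReal.ofReal_add (by positivity) (by positivity)]
          congr 1
          have key : μ ^ ((1:ℝ)/3) * μ ^ ((2:ℝ)/3) = μ := by
            rw [← Real.rpow_add hμ]; norm_num
          have hsplit : 1/(3 * μ ^ ((2:ℝ)/3)) * μ = 1/3 * μ ^ ((1:ℝ)/3) := by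
            field_simp
            linear_combination (-1 : ℝ) * key
          rw [hsplit]; ring
  -- main double-integral bound
  set L : ℝ≥0∞ := ∫⁻ x, (∫⁻ y, ENNReal.ofReal (halfPlaneGreen x y * ω' x * ω' y) ∂ν) ∂ν with hL
  -- auxiliary objects for the double-integral bound
  set u : ℝ × ℝ → ℝ≥0∞ := fun p => ENNReal.ofReal (ω' p ^ 2 / 2) with hu
  have humeas : Measurable u :=
    ENNReal.measurable_ofReal.comp ((hω'meas.pow_const 2).div_const 2)
  have hint_u : ∫⁻ p, u p ∂ν = ENNReal.ofReal (I2/2) := by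
    have hi : Integrable (fun p => ω' p ^ 2 / 2) ν := hsqint'.div_const 2
    rw [show I2/2 = ∫ p, ω' p ^ 2 / 2 ∂ν by rw [hI2, ← integral_div]]
    rw [ofReal_integral_eq_lintegral_ofReal hi
      (Filter.Eventually.of_forall fun p => by positivity)]
  have hfNmeas_pair : Measurable (fun p : (ℝ×ℝ)×(ℝ×ℝ) => ENNReal.ofReal (nearG κ p.1 p.2)) :=
    ENNReal.measurable_ofReal.comp (measurable_nearG_pair κ)
  have hfNmeas_right : ∀ x, Measurable (fun y => ENNReal.ofReal (nearG κ x y)) :=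
    fun x => ENNReal.measurable_ofReal.comp (measurable_nearG_right κ x)
  have hKbound : ∀ x : ℝ × ℝ, 0 < x.2 → (∫⁻ y, ENNReal.ofReal (nearG κ x y) ∂ν) ≤ 1 := by
    intro x hx
    rw [hν]
    exact le_trans (near_bound hκpos hx) hnear_coeff
  have hμ3nn : (0:ℝ) ≤ μ ^ ((1:ℝ)/3) := Real.rpow_nonneg hμ.le _
  have hJne : J ≠ ⊤ := ne_top_of_le_ne_top ENNReal.ofReal_ne_top hJ
  have hLbound : L ≤ ENNReal.ofReal I2 + ENNReal.ofReal (cF * μ ^ ((2:ℝ)/3)) := by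
    -- pointwise estimate on the kernel
    have hpt : ∀ x ∈ upperHalf, ∀ y ∈ upperHalf,
        ENNReal.ofReal (halfPlaneGreen x y * ω' x * ω' y) ≤
          ENNReal.ofReal (nearG κ x y) * (u x + u y)
            + ENNReal.ofReal cF * (q x * w x) * (q y * w y) := by
      intro x hx y hy
      have hx2 : (0:ℝ) < x.2 := hx
      have hy2 : (0:ℝ) < y.2 := hy
      have hG0 : 0 ≤ halfPlaneGreen x y := green_nonneg hx2.le hy2.le
      have heq : ENNReal.ofReal (halfPlaneGreen x y * ω' x * ω' y)
          = ENNReal.ofReal (halfPlaneGreen x y) * w x * w y := by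
        rw [ENNReal.ofReal_mul (mul_nonneg hG0 (hω'0 x)), ENNReal.ofReal_mul hG0]
      rw [heq]
      by_cases hN : (sqdist x y) ^ 3 * (x.2 * y.2) ≤ κ ^ 6
      · have h1 : ENNReal.ofReal (halfPlaneGreen x y) = ENNReal.ofReal (nearG κ x y) := by
          unfold nearG; rw [if_pos hN]
        have h2 : w x * w y ≤ u x + u y := by
          calc w x * w y = ENNReal.ofReal (ω' x * ω' y) :=
                (ENNReal.ofReal_mul (hω'0 x)).symm
            _ ≤ ENNReal.ofReal (ω' x ^ 2 / 2 + ω' y ^ 2 / 2) :=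
                ENNReal.ofReal_le_ofReal (by nlinarith [sq_nonneg (ω' x - ω' y)])
            _ = u x + u y := ENNReal.ofReal_add (by positivity) (by positivity)
        calc ENNReal.ofReal (halfPlaneGreen x y) * w x * w y
            = ENNReal.ofReal (nearG κ x y) * (w x * w y) := by rw [h1, mul_assoc]
          _ ≤ ENNReal.ofReal (nearG κ x y) * (u x + u y) := mul_le_mul_right h2 _
          _ ≤ _ := le_self_add
      · have hfar := far_bound hκpos hx2 hy2 hN
        have hsplit : (x.2 * y.2) ^ ((1:ℝ)/3) = x.2 ^ ((1:ℝ)/3) * y.2 ^ ((1:ℝ)/3) :=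
          Real.mul_rpow hx2.le hy2.le
        have h1 : ENNReal.ofReal (halfPlaneGreen x y) ≤ ENNReal.ofReal cF * (q x * q y) := by
          calc ENNReal.ofReal (halfPlaneGreen x y)
              ≤ ENNReal.ofReal (cF * (x.2 ^ ((1:ℝ)/3) * y.2 ^ ((1:ℝ)/3))) := by
                apply ENNReal.ofReal_le_ofReal
                rw [← hsplit, hcF]
                exact hfar
            _ = ENNReal.ofReal cF * (q x * q y) := by
                rw [ENNReal.ofReal_mul hcFpos.le,
                  ENNReal.ofReal_mul (Real.rpow_nonneg hx2.le _)]
        calc ENNReal.ofReal (halfPlaneGreen x y) * w x * w y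
            ≤ (ENNReal.ofReal cF * (q x * q y)) * w x * w y :=
              mul_le_mul_left (mul_le_mul_left h1 _) _
          _ = ENNReal.ofReal cF * (q x * w x) * (q y * w y) := by ring
          _ ≤ _ := le_add_self
    -- split into near and far double integrals
    have hIA : Measurable (fun x => ∫⁻ y, ENNReal.ofReal (nearG κ x y) * (u x + u y) ∂ν) := by
      apply Measurable.lintegral_prod_right'
        (f := fun p : (ℝ×ℝ)×(ℝ×ℝ) => ENNReal.ofReal (nearG κ p.1 p.2) * (u p.1 + u p.2))
      exact hfNmeas_pair.mul ((humeas.comp measurable_fst).add (humeas.comp measurable_snd))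
    have hstepA : L ≤ (∫⁻ x, (∫⁻ y, ENNReal.ofReal (nearG κ x y) * (u x + u y) ∂ν) ∂ν)
        + (∫⁻ x, (∫⁻ y, ENNReal.ofReal cF * (q x * w x) * (q y * w y) ∂ν) ∂ν) := by
      have hsum : L ≤ ∫⁻ x, (∫⁻ y, (ENNReal.ofReal (nearG κ x y) * (u x + u y)
          + ENNReal.ofReal cF * (q x * w x) * (q y * w y)) ∂ν) ∂ν := by
        rw [hL]
        apply lintegral_mono_ae
        rw [hν]
        filter_upwards [ae_restrict_mem measurable_upperHalf] with x hx
        apply lintegral_mono_ae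
        filter_upwards [ae_restrict_mem measurable_upperHalf] with y hy
        exact hpt x hx y hy
      refine le_trans hsum (le_of_eq ?_)
      have hinner : ∀ x, (∫⁻ y, (ENNReal.ofReal (nearG κ x y) * (u x + u y)
          + ENNReal.ofReal cF * (q x * w x) * (q y * w y)) ∂ν)
          = (∫⁻ y, ENNReal.ofReal (nearG κ x y) * (u x + u y) ∂ν)
            + ∫⁻ y, ENNReal.ofReal cF * (q x * w x) * (q y * w y) ∂ν := fun x =>
        lintegral_add_left ((hfNmeas_right x).mul (measurable_const.add humeas)) _
      rw [lintegral_congr hinner]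
      exact lintegral_add_left hIA _
    -- the near part
    have hTN : (∫⁻ x, (∫⁻ y, ENNReal.ofReal (nearG κ x y) * (u x + u y) ∂ν) ∂ν)
        ≤ ENNReal.ofReal I2 := by
      have hdistrib : ∀ x, (∫⁻ y, ENNReal.ofReal (nearG κ x y) * (u x + u y) ∂ν)
          = (∫⁻ y, ENNReal.ofReal (nearG κ x y) * u x ∂ν)
            + ∫⁻ y, ENNReal.ofReal (nearG κ x y) * u y ∂ν := by
        intro x
        rw [← lintegral_add_left (f := fun y => ENNReal.ofReal (nearG κ x y) * u x) ((hfNmeas_right x).mul measurable_const)]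
        exact lintegral_congr fun y => by ring
      rw [lintegral_congr hdistrib]
      have hT1meas : Measurable (fun x => ∫⁻ y, ENNReal.ofReal (nearG κ x y) * u x ∂ν) := by
        apply Measurable.lintegral_prod_right'
          (f := fun p : (ℝ×ℝ)×(ℝ×ℝ) => ENNReal.ofReal (nearG κ p.1 p.2) * u p.1)
        exact hfNmeas_pair.mul (humeas.comp measurable_fst)
      rw [lintegral_add_left hT1meas]
      have hT1 : (∫⁻ x, (∫⁻ y, ENNReal.ofReal (nearG κ x y) * u x ∂ν) ∂ν)
          ≤ ENNReal.ofReal (I2/2) := by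
        rw [← hint_u]
        apply lintegral_mono_ae
        rw [hν]
        filter_upwards [ae_restrict_mem measurable_upperHalf] with x hx
        rw [lintegral_mul_const' (u x) _ ENNReal.ofReal_ne_top]
        calc (∫⁻ y, ENNReal.ofReal (nearG κ x y) ∂ν) * u x ≤ 1 * u x :=
              mul_le_mul_left (hKbound x hx) _
          _ = u x := one_mul _
      have hT2 : (∫⁻ x, (∫⁻ y, ENNReal.ofReal (nearG κ x y) * u y ∂ν) ∂ν)
          ≤ ENNReal.ofReal (I2/2) := by
        rw [lintegral_lintegral_swap]
        swap
        · apply Measurable.aemeasurable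
          exact hfNmeas_pair.mul (humeas.comp measurable_snd)
        rw [← hint_u]
        apply lintegral_mono_ae
        rw [hν]
        filter_upwards [ae_restrict_mem measurable_upperHalf] with y hy
        rw [lintegral_mul_const' (u y) _ ENNReal.ofReal_ne_top]
        have hcol : (∫⁻ x, ENNReal.ofReal (nearG κ x y) ∂ν) = ∫⁻ x, ENNReal.ofReal (nearG κ y x) ∂ν :=
          lintegral_congr fun x => by rw [nearG_symm]
        calc (∫⁻ x, ENNReal.ofReal (nearG κ x y) ∂ν) * u y ≤ 1 * u y := by
              apply mul_le_mul_left
              rw [hcol]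
              exact hKbound y hy
          _ = u y := one_mul _
      calc _ ≤ ENNReal.ofReal (I2/2) + ENNReal.ofReal (I2/2) := add_le_add hT1 hT2
        _ = ENNReal.ofReal I2 := by
            rw [← ENNReal.ofReal_add (by linarith) (by linarith)]
            norm_num
    -- the far part
    have hTF : (∫⁻ x, (∫⁻ y, ENNReal.ofReal cF * (q x * w x) * (q y * w y) ∂ν) ∂ν)
        ≤ ENNReal.ofReal (cF * μ ^ ((2:ℝ)/3)) := by
      have hinner : ∀ x, (∫⁻ y, ENNReal.ofReal cF * (q x * w x) * (q y * w y) ∂ν)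
          = ENNReal.ofReal cF * (q x * w x) * J := by
        intro x
        rw [hJdef]
        exact lintegral_const_mul' _ _
          (ENNReal.mul_ne_top ENNReal.ofReal_ne_top
            (ENNReal.mul_ne_top ENNReal.ofReal_ne_top ENNReal.ofReal_ne_top))
      rw [lintegral_congr hinner]
      have houter : (∫⁻ x, ENNReal.ofReal cF * (q x * w x) * J ∂ν)
          = ENNReal.ofReal cF * J * J := by
        calc (∫⁻ x, ENNReal.ofReal cF * (q x * w x) * J ∂ν)
            = ∫⁻ x, (ENNReal.ofReal cF * J) * (q x * w x) ∂ν :=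
              lintegral_congr fun x => by ring
          _ = (ENNReal.ofReal cF * J) * J := by
              rw [hJdef]
              exact lintegral_const_mul' _ _
                (ENNReal.mul_ne_top ENNReal.ofReal_ne_top hJne)
          _ = ENNReal.ofReal cF * J * J := rfl
      rw [houter]
      calc ENNReal.ofReal cF * J * J
          ≤ ENNReal.ofReal cF * ENNReal.ofReal (μ ^ ((1:ℝ)/3)) * ENNReal.ofReal (μ ^ ((1:ℝ)/3)) :=
            mul_le_mul' (mul_le_mul_right hJ _) hJ
        _ = ENNReal.ofReal (cF * μ ^ ((1:ℝ)/3) * μ ^ ((1:ℝ)/3)) := by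
            rw [ENNReal.ofReal_mul (mul_nonneg hcFpos.le hμ3nn),
              ENNReal.ofReal_mul hcFpos.le]
        _ = ENNReal.ofReal (cF * μ ^ ((2:ℝ)/3)) := by
            congr 1
            rw [mul_assoc, ← Real.rpow_add hμ]
            norm_num
    exact le_trans hstepA (add_le_add hTN hTF)
  -- kinetic energy bound
  have hLne : L ≠ ⊤ := ne_top_of_le_ne_top
    (ENNReal.add_ne_top.2 ⟨ENNReal.ofReal_ne_top, ENNReal.ofReal_ne_top⟩) hLbound
  have hkE : kineticEnergy ω ≤ (1/2) * (I2 + cF * μ ^ ((2:ℝ)/3)) := by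
    set H : ℝ × ℝ → ℝ := fun x => ∫ y, halfPlaneGreen x y * ω' y ∂ν with hH
    have hfun_eq : ∀ x, ω' x * H x = ∫ y, halfPlaneGreen x y * ω' x * ω' y ∂ν := by
      intro x
      rw [hH, ← integral_const_mul]
      exact integral_congr_ae (Filter.Eventually.of_forall fun y => by ring)
    have hkEeq : kineticEnergy ω = (1/2) * ∫ x, ω' x * H x ∂ν := by
      unfold kineticEnergy
      congr 1
      apply integral_congr_ae
      filter_upwards [hae] with x hx
      have hinner : (∫ y in upperHalf, halfPlaneGreen x y * ω x * ω y)
          = ω x * ∫ y, halfPlaneGreen x y * ω y ∂ν := by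
        rw [← integral_const_mul, hν]
        exact integral_congr_ae (Filter.Eventually.of_forall fun y => by ring)
      rw [hinner, hx]
      congr 1
      rw [hH]
      apply integral_congr_ae
      filter_upwards [hae] with y hy
      rw [hy]
    have hptw : ∀ x, ω' x * H x ≤ (∫⁻ y, ENNReal.ofReal (halfPlaneGreen x y * ω' x * ω' y) ∂ν).toReal := by
      intro x
      rw [hfun_eq x]
      exact integral_le_toReal_lintegral ν _
    have hout : ∫ x, ω' x * H x ∂ν ≤ (∫⁻ x, ENNReal.ofReal (ω' x * H x) ∂ν).toReal :=
      integral_le_toReal_lintegral ν _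
    have hlif : ∫⁻ x, ENNReal.ofReal (ω' x * H x) ∂ν ≤ L := by
      rw [hL]
      apply lintegral_mono fun x => ?_
      calc ENNReal.ofReal (ω' x * H x)
          ≤ ENNReal.ofReal ((∫⁻ y, ENNReal.ofReal (halfPlaneGreen x y * ω' x * ω' y) ∂ν).toReal) :=
            ENNReal.ofReal_le_ofReal (hptw x)
        _ ≤ ∫⁻ y, ENNReal.ofReal (halfPlaneGreen x y * ω' x * ω' y) ∂ν :=
            ENNReal.ofReal_toReal_le
    have hintegral : ∫ x, ω' x * H x ∂ν ≤ I2 + cF * μ ^ ((2:ℝ)/3) := by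
      calc ∫ x, ω' x * H x ∂ν ≤ (∫⁻ x, ENNReal.ofReal (ω' x * H x) ∂ν).toReal := hout
        _ ≤ L.toReal := ENNReal.toReal_mono hLne hlif
        _ ≤ (ENNReal.ofReal I2 + ENNReal.ofReal (cF * μ ^ ((2:ℝ)/3))).toReal :=
            ENNReal.toReal_mono
              (ENNReal.add_ne_top.2 ⟨ENNReal.ofReal_ne_top, ENNReal.ofReal_ne_top⟩) hLbound
        _ = I2 + cF * μ ^ ((2:ℝ)/3) := by
            rw [ENNReal.toReal_add ENNReal.ofReal_ne_top ENNReal.ofReal_ne_top,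
              ENNReal.toReal_ofReal hI2nn,
              ENNReal.toReal_ofReal (by positivity)]
    rw [hkEeq]
    linarith
  -- conclude
  have hE2 : E₂ ω ≤ (1/2) * (cF * μ ^ ((2:ℝ)/3)) := by
    unfold E₂
    rw [hI2eq]
    linarith
  have hμ23pos : (0:ℝ) < μ ^ ((2:ℝ)/3) := Real.rpow_pos_of_pos hμ _
  calc E₂ ω ≤ (1/2) * (cF * μ ^ ((2:ℝ)/3)) := hE2
    _ ≤ (cF/2 + 1) * μ ^ ((2:ℝ)/3) := by nlinarith
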